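/- Let n, m ≥ 1, let x_0 < x_1 < ⋯ < x_n and y_0 < y_1 < ⋯ < y_m be real numbers, let a_i < b_i for i ∈ {1,…,n} and c_j < d_j for j ∈ {1,…,m}. Let L_{1,i} : ℝ → ℝ be the affine map with L_{1,i}(a_i) = x_{i−1} and L_{1,i}(b_i) = x_i, and L_{2,j} : ℝ → ℝ the affine map with L_{2,j}(c_j) = y_{j−1} and L_{2,j}(d_j) = y_j. Define ψ_i(x) = b_i if x > x_i, ψ_i(x) = L_{1,i}^{−1}(x) if x_{i−1} ≤ x ≤ x_i, ψ_i(x) = a_i if x < x_{i−1}; and φ_j(y) = d_j if y > y_j, φ_j(y) = L_{2,j}^{−1}(y) if y_{j−1} ≤ y ≤ y_j, φ_j(y) = c_j if y < y_{j−1}. For a function f : ℝ × ℝ → ℝ define f_{i,0}(x,y) = f(L_{1,i}(x), y), f_{0,j}(x,y) = f(x, L_{2,j}(y)), and f_{i,j}(x,y) = f(L_{1,i}(x), L_{2,j}(y)). Then for all (x, y) ∈ [x_0, x_n] × [y_0, y_m], f(x, y) = ∑_{i=1}^n ∑_{j=1}^m f_{i,j}(ψ_i(x), φ_j(y)) − ∑_{i=1}^n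 ∑_{j=1}^{m−1} f_{i,0}(ψ_i(x), y_j) − ∑_{i=1}^{n−1} ∑_{j=1}^m f_{0,j}(x_i, φ_j(y)) + ∑_{i=1}^{n−1} ∑_{j=1}^{m−1} f(x_i, y_j). -/

import Mathlib

/-- The affine map `L_i(t) = x_{i−1} + (t − a_i)·(x_i − x_{i−1})/(b_i − a_i)`,
so that `L_i(a_i) = x_{i−1}` and `L_i(b_i) = x_i`. -/
noncomputable def LFun (x a b : ℕ → ℝ) (i : ℕ) (t : ℝ) : ℝ :=
  x (i - 1) + (t - a i) * (x i - x (i - 1)) / (b i - a i)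

/-- The clamped inverse of `L_i`:
`ψ_i(t) = b_i` for `t > x_i`, `ψ_i(t) = L_i⁻¹(t)` on `[x_{i−1}, x_i]`,
and `ψ_i(t) = a_i` for `t < x_{i−1}`. -/
noncomputable def clampInv (x a b : ℕ → ℝ) (i : ℕ) (t : ℝ) : ℝ :=
  if x i < t then b i
  else if x (i - 1) ≤ t then a i + (t - x (i - 1)) * (b i - a i) / (x i - x (i - 1))
  else a i

lemma LFun_clampInv (x a b : ℕ → ℝ) (i : ℕ) (hxi : x (i-1) < x i) (hab : a i < b i) (u : ℝ) :
    LFun x a b i (clampInv x a b i u)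
      = if x i < u then x i else if x (i - 1) ≤ u then u else x (i - 1) := by
  have h1 : b i - a i ≠ 0 := sub_ne_zero.2 (ne_of_gt hab)
  have h2 : x i - x (i-1) ≠ 0 := sub_ne_zero.2 (ne_of_gt hxi)
  unfold LFun clampInv
  split_ifs with hA hB
  · field_simp
    ring
  · field_simp
    ring
  · field_simp
    ring

lemma x_mono (x : ℕ → ℝ) (n : ℕ) (hx : ∀ i ∈ Finset.Icc 1 n, x (i - 1) < x i) :
    ∀ i ≤ n, x i ≤ x n := by
  induction n with
  | zero => intro i hi; interval_cases i; exact le_refl _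
  | succ k ih =>
    intro i hi
    rcases Nat.lt_or_ge i (k+1) with h | h
    · have h1 : x i ≤ x k := ih (fun j hj => hx j (Finset.mem_Icc.2
        ⟨(Finset.mem_Icc.1 hj).1, (Finset.mem_Icc.1 hj).2.trans (Nat.le_succ k)⟩))
        i (Nat.lt_succ_iff.1 h)
      have h2 : x k < x (k+1) := by
        have := hx (k+1) (Finset.mem_Icc.2 ⟨Nat.succ_le_succ (Nat.zero_le k), le_refl _⟩)
        simpa using this
      linarith
    · have : i = k+1 := le_antisymm hi h
      simp [this]

lemma oneD (n : ℕ) (hn : 1 ≤ n) (x : ℕ → ℝ)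
    (hx : ∀ i ∈ Finset.Icc 1 n, x (i - 1) < x i) (h : ℝ → ℝ)
    (u : ℝ) (hu : u ∈ Set.Icc (x 0) (x n)) :
    h u = (∑ i ∈ Finset.Icc 1 n,
        h (if x i < u then x i else if x (i - 1) ≤ u then u else x (i - 1)))
      - ∑ i ∈ Finset.Icc 1 (n - 1), h (x i) := by
  induction n, hn using Nat.le_induction with
  | base =>
    simp only [Finset.Icc_self, Finset.sum_singleton]
    obtain ⟨h0, h1⟩ := hu
    rw [if_neg (not_lt.2 h1), if_pos (by simpa using h0)]
    simp
  | succ k hk ih =>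
    have hxk : ∀ i ∈ Finset.Icc 1 k, x (i - 1) < x i := fun i hi =>
      hx i (Finset.mem_Icc.2 ⟨(Finset.mem_Icc.1 hi).1, (Finset.mem_Icc.1 hi).2.trans (Nat.le_succ k)⟩)
    rw [Finset.sum_Icc_succ_top (by omega : 1 ≤ k + 1)]
    simp only [Nat.add_sub_cancel]
    rcases le_or_gt u (x k) with hcase | hcase
    · have hu' : u ∈ Set.Icc (x 0) (x k) := ⟨hu.1, hcase⟩
      have IH := ih hxk hu'
      have hterm : h (if x (k+1) < u then x (k+1) else if x k ≤ u then u else x k)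
          = h (x k) := by
        have hk1 : x k < x (k+1) := by
          have := hx (k+1) (Finset.mem_Icc.2 ⟨by omega, le_refl _⟩)
          simpa using this
        rw [if_neg (by push_neg; linarith)]
        rcases lt_or_eq_of_le hcase with h' | h'
        · rw [if_neg (not_le.2 h')]
        · rw [if_pos (le_of_eq h'.symm), h']
      rw [hterm]
      have hsplit : ∑ i ∈ Finset.Icc 1 k, h (x i)
          = (∑ i ∈ Finset.Icc 1 (k-1), h (x i)) + h (x k) := by
        obtain ⟨j, rfl⟩ : ∃ j, k = j + 1 := ⟨k - 1, by omega⟩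
        rw [Finset.sum_Icc_succ_top (by omega : 1 ≤ j + 1)]
        simp
      rw [hsplit]
      linarith [IH]
    · have hall : ∀ i ∈ Finset.Icc 1 k,
          (if x i < u then x i else if x (i - 1) ≤ u then u else x (i - 1)) = x i := by
        intro i hi
        have : x i ≤ x k := x_mono x k hxk i (Finset.mem_Icc.1 hi).2
        rw [if_pos (lt_of_le_of_lt this hcase)]
      rw [Finset.sum_congr rfl (fun i hi => by rw [hall i hi])]
      have hterm : (if x (k+1) < u then x (k+1) else if x k ≤ u then u else x k) = u := by
        rw [if_neg (not_lt.2 hu.2), if_pos (le_of_lt hcase)]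
      rw [hterm]
      ring

lemma oneD' (n : ℕ) (hn : 1 ≤ n) (x a b : ℕ → ℝ)
    (hx : ∀ i ∈ Finset.Icc 1 n, x (i - 1) < x i)
    (hab : ∀ i ∈ Finset.Icc 1 n, a i < b i) (h : ℝ → ℝ)
    (u : ℝ) (hu : u ∈ Set.Icc (x 0) (x n)) :
    h u = (∑ i ∈ Finset.Icc 1 n, h (LFun x a b i (clampInv x a b i u)))
      - ∑ i ∈ Finset.Icc 1 (n - 1), h (x i) := by
  rw [oneD n hn x hx h u hu]
  congr 1
  apply Finset.sum_congr rfl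
  intro i hi
  rw [LFun_clampInv x a b i (hx i hi) (hab i hi) u]

/-- Two-dimensional multi-component decomposition:
`f(x, y) = ∑_{i,j} f_{i,j}(ψ_i(x), φ_j(y)) − ∑_{i} ∑_{j<m} f_{i,0}(ψ_i(x), y_j)
 − ∑_{i<n} ∑_{j} f_{0,j}(x_i, φ_j(y)) + ∑_{i<n} ∑_{j<m} f(x_i, y_j)`
on `[x_0, x_n] × [y_0, y_m]`. -/
theorem mmnn_decomposition_2D (n m : ℕ) (hn : 1 ≤ n) (hm : 1 ≤ m)
    (x a b : ℕ → ℝ) (y c d : ℕ → ℝ)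
    (hx : ∀ i ∈ Finset.Icc 1 n, x (i - 1) < x i)
    (hy : ∀ j ∈ Finset.Icc 1 m, y (j - 1) < y j)
    (hab : ∀ i ∈ Finset.Icc 1 n, a i < b i)
    (hcd : ∀ j ∈ Finset.Icc 1 m, c j < d j)
    (f : ℝ → ℝ → ℝ) :
    ∀ u ∈ Set.Icc (x 0) (x n), ∀ v ∈ Set.Icc (y 0) (y m),
      f u v =
        (∑ i ∈ Finset.Icc 1 n, ∑ j ∈ Finset.Icc 1 m,
            f (LFun x a b i (clampInv x a b i u)) (LFun y c d j (clampInv y c d j v)))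
          - (∑ i ∈ Finset.Icc 1 n, ∑ j ∈ Finset.Icc 1 (m - 1),
              f (LFun x a b i (clampInv x a b i u)) (y j))
          - (∑ i ∈ Finset.Icc 1 (n - 1), ∑ j ∈ Finset.Icc 1 m,
              f (x i) (LFun y c d j (clampInv y c d j v)))
          + ∑ i ∈ Finset.Icc 1 (n - 1), ∑ j ∈ Finset.Icc 1 (m - 1), f (x i) (y j) := by
  intro u hu v hv
  have H2 : ∀ t : ℝ, f t v
      = (∑ j ∈ Finset.Icc 1 m, f t (LFun y c d j (clampInv y c d j v)))
        - ∑ j ∈ Finset.Icc 1 (m - 1), f t (y j) :=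
    fun t => oneD' m hm y c d hy hcd (fun s => f t s) v hv
  have H1 := oneD' n hn x a b hx hab (fun t => f t v) u hu
  rw [H1]
  rw [Finset.sum_congr rfl (fun i _ => H2 (LFun x a b i (clampInv x a b i u))),
    Finset.sum_congr rfl (fun i _ => H2 (x i)),
    Finset.sum_sub_distrib, Finset.sum_sub_distrib]
  ring
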